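/- Let p > 1, s ∈ [0,1], ν > 0, and let a : ℝ^n → ℝ^n be a C¹ vector field satisfying ⟨∂a(ξ)λ, λ⟩ ≥ ν (s² + |ξ|²)^{(p−2)/2} |λ|² for all ξ, λ ∈ ℝ^n (with ξ ≠ 0 if s = 0). Then there is a constant c depending only on n, p, ν such that ⟨a(ξ₁) − a(ξ₂), ξ₁ − ξ₂⟩ ≥ (1/c) (s² + |ξ₁|² + |ξ₂|²)^{(p−2)/2} |ξ₁ − ξ₂|² for all ξ₁, ξ₂ ∈ ℝ^n not both zero when s = 0. -/

import Mathlib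

set_option maxHeartbeats 2000000

open Set MeasureTheory Filter Topology

private lemma ftc_inner {n : ℕ} (a : EuclideanSpace ℝ (Fin n) → EuclideanSpace ℝ (Fin n))
    (ha : ContDiff ℝ 1 a) (x v : EuclideanSpace ℝ (Fin n)) :
    (inner ℝ (a (x + v) - a x) v : ℝ)
      = ∫ t in (0:ℝ)..1, (inner ℝ v (fderiv ℝ a (x + t • v) v) : ℝ) := by
  have hγt : ∀ t : ℝ, HasDerivAt (fun u : ℝ => x + u • v) v t := fun t => by
    simpa using ((hasDerivAt_id t).smul_const v).const_add x
  have hderiv : ∀ t : ℝ, HasDerivAt (fun u => (inner ℝ v (a (x + u • v)) : ℝ))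
      ((inner ℝ v (fderiv ℝ a (x + t • v) v) : ℝ)) t := by
    intro t
    have h1 : HasDerivAt (fun u : ℝ => a (x + u • v)) (fderiv ℝ a (x + t • v) v) t :=
      (ha.differentiable one_ne_zero (x + t • v)).hasFDerivAt.comp_hasDerivAt t (hγt t)
    have h2 := (innerSL ℝ v).hasFDerivAt.comp_hasDerivAt t h1
    exact h2
  have hcont : Continuous fun t : ℝ => (inner ℝ v (fderiv ℝ a (x + t • v) v) : ℝ) := by
    have hγc : Continuous fun t : ℝ => x + t • v :=
      continuous_const.add (continuous_id.smul continuous_const)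
    have h1 : Continuous fun t : ℝ => fderiv ℝ a (x + t • v) :=
      (ha.continuous_fderiv one_ne_zero).comp hγc
    exact continuous_const.inner (h1.clm_apply continuous_const)
  have h := intervalIntegral.integral_eq_sub_of_hasDerivAt
      (f := fun u => (inner ℝ v (a (x + u • v)) : ℝ))
      (f' := fun t => (inner ℝ v (fderiv ℝ a (x + t • v) v) : ℝ))
      (fun t _ => hderiv t) (hcont.intervalIntegrable 0 1)
  rw [h]
  simp only [one_smul, zero_smul, add_zero]
  rw [inner_sub_left, real_inner_comm (a (x + v)) v, real_inner_comm (a x) v]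

private lemma mono_aux (n : ℕ) (p ν : ℝ) (hp : 1 < p) (hν : 0 < ν)
    (s : ℝ) (hs : s ∈ Icc (0:ℝ) 1)
    (a : EuclideanSpace ℝ (Fin n) → EuclideanSpace ℝ (Fin n)) (ha : ContDiff ℝ 1 a)
    (hell : ∀ ξ lam : EuclideanSpace ℝ (Fin n), (s = 0 → ξ ≠ 0) →
      ν * (s^2 + ‖ξ‖^2) ^ ((p-2)/2) * ‖lam‖^2 ≤ (inner ℝ (fderiv ℝ a ξ lam) lam : ℝ))
    (ξ₁ ξ₂ : EuclideanSpace ℝ (Fin n)) (hz : s = 0 → ¬(ξ₁ = 0 ∧ ξ₂ = 0))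
    (hle : ‖ξ₂‖ ≤ ‖ξ₁‖) :
    (1 / max (1/ν) (4 * (8:ℝ) ^ ((p-2)/2) / ν)) * (s^2 + ‖ξ₁‖^2 + ‖ξ₂‖^2) ^ ((p-2)/2)
        * ‖ξ₁ - ξ₂‖^2
      ≤ (inner ℝ (a ξ₁ - a ξ₂) (ξ₁ - ξ₂) : ℝ) := by
  set q : ℝ := (p-2)/2 with hqdef
  set v := ξ₁ - ξ₂ with hv
  set T : ℝ := s^2 + ‖ξ₁‖^2 + ‖ξ₂‖^2 with hT
  set c : ℝ := max (1/ν) (4 * (8:ℝ) ^ q / ν) with hc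
  set D : ℝ → ℝ := fun t => (inner ℝ v (fderiv ℝ a (ξ₂ + t • v) v) : ℝ) with hD
  have hc1 : 1/ν ≤ c := le_max_left _ _
  have hc2 : 4 * (8:ℝ)^q / ν ≤ c := le_max_right _ _
  have h8q : (0:ℝ) < (8:ℝ)^q := Real.rpow_pos_of_pos (by norm_num) q
  have hcpos : 0 < c := lt_of_lt_of_le (by positivity) hc1
  have hT0 : 0 < T := by
    rcases eq_or_ne s 0 with hs0 | hs0
    · rcases not_and_or.1 (hz hs0) with h | h
      · have h1 : 0 < ‖ξ₁‖ := norm_pos_iff.2 h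
        nlinarith [sq_nonneg s, norm_nonneg ξ₂]
      · have h1 : 0 < ‖ξ₂‖ := norm_pos_iff.2 h
        nlinarith [sq_nonneg s, norm_nonneg ξ₁]
    · have h0 : 0 < s := lt_of_le_of_ne hs.1 (Ne.symm hs0)
      nlinarith [norm_nonneg ξ₁, norm_nonneg ξ₂]
  have hFTC : (inner ℝ (a ξ₁ - a ξ₂) v : ℝ) = ∫ t in (0:ℝ)..1, D t := by
    have h := ftc_inner a ha ξ₂ v
    rw [show ξ₂ + v = ξ₁ by rw [hv]; abel] at h
    exact h
  have hDcont : Continuous D := by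
    have hγc : Continuous fun t : ℝ => ξ₂ + t • v :=
      continuous_const.add (continuous_id.smul continuous_const)
    have h1 : Continuous fun t : ℝ => fderiv ℝ a (ξ₂ + t • v) :=
      (ha.continuous_fderiv one_ne_zero).comp hγc
    exact continuous_const.inner (h1.clm_apply continuous_const)
  have hbound : ∀ t : ℝ, (s = 0 → ξ₂ + t • v ≠ 0) →
      ν * (s^2 + ‖ξ₂ + t • v‖^2)^q * ‖v‖^2 ≤ D t := by
    intro t ht
    have h := hell (ξ₂ + t • v) v ht
    rwa [real_inner_comm] at h
  -- behavior at a degenerate point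
  have hdeg : ∀ t : ℝ, s = 0 → ξ₂ + t • v = 0 → v ≠ 0 ∧ ∀ u : ℝ, u ≠ t → ξ₂ + u • v ≠ 0 := by
    intro t hs0 h0
    have hvne : v ≠ 0 := by
      intro hv0
      rw [hv0, smul_zero, add_zero] at h0
      refine hz hs0 ⟨?_, h0⟩
      have : ξ₁ = ξ₂ + v := by rw [hv]; abel
      rw [this, h0, hv0, add_zero]
    refine ⟨hvne, fun u hu => ?_⟩
    have huv : ξ₂ + u • v = (u - t) • v := by
      have h2 : ξ₂ = -(t • v) := eq_neg_of_add_eq_zero_left h0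
      rw [h2]; module
    rw [huv]
    exact smul_ne_zero (sub_ne_zero.2 hu) hvne
  have hDnonneg : ∀ t : ℝ, 0 ≤ D t := by
    intro t
    rcases eq_or_ne (s^2 + ‖ξ₂ + t • v‖^2) 0 with h0 | h0
    · have hs0 : s = 0 := by
        have := sq_nonneg s; have := sq_nonneg ‖ξ₂ + t • v‖
        have hs2 : s^2 = 0 := by nlinarith
        exact pow_eq_zero_iff (by norm_num) |>.1 hs2
      have hγ0 : ξ₂ + t • v = 0 := by
        have h2 : ‖ξ₂ + t • v‖^2 = 0 := by nlinarith [sq_nonneg s]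
        have := pow_eq_zero_iff (n := 2) (by norm_num) |>.1 h2
        exact norm_eq_zero.1 this
      obtain ⟨hvne, hne⟩ := hdeg t hs0 hγ0
      have htd : Tendsto D (𝓝[≠] t) (𝓝 (D t)) :=
        (hDcont.tendsto t).mono_left nhdsWithin_le_nhds
      refine ge_of_tendsto htd ?_
      filter_upwards [self_mem_nhdsWithin] with u hu
      have hb := hbound u (fun _ => hne u hu)
      have hnn : 0 ≤ ν * (s^2 + ‖ξ₂ + u • v‖^2)^q * ‖v‖^2 := by positivity
      linarith
    · have hpos : 0 < s^2 + ‖ξ₂ + t • v‖^2 := lt_of_le_of_ne (by positivity) (Ne.symm h0)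
      have hprem : s = 0 → ξ₂ + t • v ≠ 0 := by
        intro hs0 hg0
        rw [hs0, hg0] at hpos
        norm_num at hpos
      have hb := hbound t hprem
      have hnn : 0 ≤ ν * (s^2 + ‖ξ₂ + t • v‖^2)^q * ‖v‖^2 := by positivity
      linarith
  have hnorm_le : ∀ t ∈ Icc (0:ℝ) 1, s^2 + ‖ξ₂ + t • v‖^2 ≤ T := by
    intro t ht
    have h1 : ξ₂ + t • v = (1 - t) • ξ₂ + t • ξ₁ := by
      rw [hv]; module
    have h2 : ‖ξ₂ + t • v‖ ≤ (1-t) * ‖ξ₂‖ + t * ‖ξ₁‖ := by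
      rw [h1]
      refine (norm_add_le _ _).trans ?_
      rw [norm_smul, norm_smul, Real.norm_eq_abs, Real.norm_eq_abs,
        abs_of_nonneg (by linarith [ht.2]), abs_of_nonneg ht.1]
    have h3 : ‖ξ₂ + t • v‖ ≤ ‖ξ₁‖ := by
      nlinarith [mul_nonneg (show (0:ℝ) ≤ 1 - t by linarith [ht.2])
        (show (0:ℝ) ≤ ‖ξ₁‖ - ‖ξ₂‖ by linarith)]
    rw [hT]
    nlinarith [norm_nonneg (ξ₂ + t • v), norm_nonneg ξ₁, norm_nonneg ξ₂]
  rw [show (inner ℝ (a ξ₁ - a ξ₂) v : ℝ) = ∫ t in (0:ℝ)..1, D t from hFTC]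
  rcases le_or_gt p 2 with hp2 | hp2
  · -- case 1 < p ≤ 2
    have hq0 : q ≤ 0 := by rw [hqdef]; linarith
    have hpt : ∀ t ∈ Icc (0:ℝ) 1, ν * T^q * ‖v‖^2 ≤ D t := by
      intro t ht
      rcases eq_or_ne (s^2 + ‖ξ₂ + t • v‖^2) 0 with h0 | h0
      · have hs0 : s = 0 := by
          have := sq_nonneg s; have := sq_nonneg ‖ξ₂ + t • v‖
          have hs2 : s^2 = 0 := by nlinarith
          exact pow_eq_zero_iff (by norm_num) |>.1 hs2
        have hγ0 : ξ₂ + t • v = 0 := by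
          have h2 : ‖ξ₂ + t • v‖^2 = 0 := by nlinarith [sq_nonneg s]
          have := pow_eq_zero_iff (n := 2) (by norm_num) |>.1 h2
          exact norm_eq_zero.1 this
        obtain ⟨hvne, hne⟩ := hdeg t hs0 hγ0
        have htd : Tendsto D (𝓝[≠] t) (𝓝 (D t)) :=
          (hDcont.tendsto t).mono_left nhdsWithin_le_nhds
        refine ge_of_tendsto htd ?_
        have hcont2 : Tendsto (fun u : ℝ => s^2 + ‖ξ₂ + u • v‖^2) (𝓝 t) (𝓝 0) := by
          have hc2' : Continuous fun u : ℝ => s^2 + ‖ξ₂ + u • v‖^2 :=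
            continuous_const.add
              (((continuous_const.add (continuous_id.smul continuous_const)).norm).pow 2)
          have := hc2'.tendsto t
          rwa [h0] at this
        have hev1 : ∀ᶠ u in 𝓝[≠] t, s^2 + ‖ξ₂ + u • v‖^2 < T :=
          (hcont2.mono_left nhdsWithin_le_nhds).eventually_lt_const hT0
        filter_upwards [hev1, self_mem_nhdsWithin] with u hu1 hu2
        have hneu : ξ₂ + u • v ≠ 0 := hne u hu2
        have hposu : 0 < s^2 + ‖ξ₂ + u • v‖^2 := by
          have h5 : 0 < ‖ξ₂ + u • v‖ := norm_pos_iff.2 hneu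
          exact add_pos_of_nonneg_of_pos (sq_nonneg s) (pow_pos h5 2)
        have hmono : T^q ≤ (s^2 + ‖ξ₂ + u • v‖^2)^q :=
          Real.rpow_le_rpow_of_nonpos hposu (le_of_lt hu1) hq0
        have hb := hbound u (fun _ => hneu)
        have := mul_le_mul_of_nonneg_right
          (mul_le_mul_of_nonneg_left hmono hν.le) (sq_nonneg ‖v‖)
        linarith
      · have hpos : 0 < s^2 + ‖ξ₂ + t • v‖^2 := lt_of_le_of_ne (by positivity) (Ne.symm h0)
        have hprem : s = 0 → ξ₂ + t • v ≠ 0 := by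
          intro hs0 hg0
          rw [hs0, hg0] at hpos
          norm_num at hpos
        have hmono : T^q ≤ (s^2 + ‖ξ₂ + t • v‖^2)^q :=
          Real.rpow_le_rpow_of_nonpos hpos (hnorm_le t ht) hq0
        have hb := hbound t hprem
        have := mul_le_mul_of_nonneg_right
          (mul_le_mul_of_nonneg_left hmono hν.le) (sq_nonneg ‖v‖)
        linarith
    have h1c : 1/c ≤ ν := by
      have := one_div_le_one_div_of_le (by positivity : (0:ℝ) < 1/ν) hc1
      rwa [one_div_one_div] at this
    have hstep1 : (1/c) * T^q * ‖v‖^2 ≤ ν * T^q * ‖v‖^2 := by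
      have h2 : 0 ≤ T^q * ‖v‖^2 := by positivity
      calc (1/c) * T^q * ‖v‖^2 = (1/c) * (T^q * ‖v‖^2) := by ring
        _ ≤ ν * (T^q * ‖v‖^2) := mul_le_mul_of_nonneg_right h1c h2
        _ = ν * T^q * ‖v‖^2 := by ring
    have hstep2 : ν * T^q * ‖v‖^2 ≤ ∫ t in (0:ℝ)..1, D t := by
      have h := intervalIntegral.integral_mono_on (by norm_num : (0:ℝ) ≤ 1)
        (intervalIntegrable_const (μ := MeasureTheory.volume)) (hDcont.intervalIntegrable 0 1) hpt
      simpa using h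
    linarith
  · -- case p > 2
    have hq0 : 0 ≤ q := by rw [hqdef]; linarith
    have hpt2 : ∀ t ∈ Icc (3/4 : ℝ) 1, ν * (T/8)^q * ‖v‖^2 ≤ D t := by
      intro t ht
      have hvle : ‖v‖ ≤ 2 * ‖ξ₁‖ := by
        calc ‖v‖ = ‖ξ₁ - ξ₂‖ := by rw [hv]
          _ ≤ ‖ξ₁‖ + ‖ξ₂‖ := norm_sub_le _ _
          _ ≤ 2 * ‖ξ₁‖ := by linarith
      have hlow : ‖ξ₁‖/2 ≤ ‖ξ₂ + t • v‖ := by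
        have h1 : ξ₁ - (ξ₂ + t • v) = (1-t) • v := by
          rw [hv]; module
        have h2 : ‖ξ₁‖ - ‖ξ₂ + t • v‖ ≤ ‖ξ₁ - (ξ₂ + t • v)‖ := norm_sub_norm_le _ _
        rw [h1, norm_smul, Real.norm_eq_abs, abs_of_nonneg (by linarith [ht.2])] at h2
        nlinarith [mul_nonneg (show (0:ℝ) ≤ 1 - t by linarith [ht.2])
          (show (0:ℝ) ≤ 2*‖ξ₁‖ - ‖v‖ by linarith),
          mul_nonneg (show (0:ℝ) ≤ t - 3/4 by linarith [ht.1]) (norm_nonneg ξ₁)]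
      have hbase : T/8 ≤ s^2 + ‖ξ₂ + t • v‖^2 := by
        rw [hT]
        nlinarith [norm_nonneg (ξ₂ + t • v), norm_nonneg ξ₁, norm_nonneg ξ₂, sq_nonneg s,
          mul_nonneg (show (0:ℝ) ≤ ‖ξ₂ + t • v‖ - ‖ξ₁‖/2 by linarith)
            (show (0:ℝ) ≤ ‖ξ₂ + t • v‖ + ‖ξ₁‖/2 by positivity),
          mul_nonneg (show (0:ℝ) ≤ ‖ξ₁‖ - ‖ξ₂‖ by linarith)
            (show (0:ℝ) ≤ ‖ξ₁‖ + ‖ξ₂‖ by positivity)]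
      have hbpos : 0 < s^2 + ‖ξ₂ + t • v‖^2 := lt_of_lt_of_le (by positivity) hbase
      have hprem : s = 0 → ξ₂ + t • v ≠ 0 := by
        intro hs0 hg0
        rw [hs0, hg0] at hbpos
        norm_num at hbpos
      have hmono : (T/8)^q ≤ (s^2 + ‖ξ₂ + t • v‖^2)^q :=
        Real.rpow_le_rpow (by positivity) hbase hq0
      have hb := hbound t hprem
      have := mul_le_mul_of_nonneg_right
        (mul_le_mul_of_nonneg_left hmono hν.le) (sq_nonneg ‖v‖)
      linarith
    have hi1 : (0:ℝ) ≤ ∫ t in (0:ℝ)..(3/4:ℝ), D t :=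
      intervalIntegral.integral_nonneg (by norm_num) (fun u _ => hDnonneg u)
    have hi2 : (1/4) * (ν * (T/8)^q * ‖v‖^2) ≤ ∫ t in (3/4:ℝ)..1, D t := by
      have h := intervalIntegral.integral_mono_on (by norm_num : (3/4:ℝ) ≤ 1)
        (intervalIntegrable_const (μ := MeasureTheory.volume)) (hDcont.intervalIntegrable (3/4) 1) hpt2
      rw [intervalIntegral.integral_const, smul_eq_mul] at h
      linarith
    have hadd : (∫ t in (0:ℝ)..(3/4:ℝ), D t) + ∫ t in (3/4:ℝ)..1, D t
        = ∫ t in (0:ℝ)..1, D t :=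
      intervalIntegral.integral_add_adjacent_intervals
        (hDcont.intervalIntegrable 0 (3/4)) (hDcont.intervalIntegrable (3/4) 1)
    have h1c : 1/c ≤ ν / (4 * (8:ℝ)^q) := by
      have h4 : 0 < 4 * (8:ℝ)^q / ν := by positivity
      have := one_div_le_one_div_of_le h4 hc2
      rwa [one_div_div] at this
    have hstep1 : (1/c) * T^q * ‖v‖^2 ≤ (1/4) * (ν * (T/8)^q * ‖v‖^2) := by
      rw [Real.div_rpow hT0.le (by norm_num : (0:ℝ) ≤ 8)]
      have h2 : 0 ≤ T^q * ‖v‖^2 := by positivity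
      calc (1/c) * T^q * ‖v‖^2 = (1/c) * (T^q * ‖v‖^2) := by ring
        _ ≤ (ν / (4 * (8:ℝ)^q)) * (T^q * ‖v‖^2) := mul_le_mul_of_nonneg_right h1c h2
        _ = (1/4) * (ν * (T^q / (8:ℝ)^q) * ‖v‖^2) := by field_simp
    linarith

/-- Classical monotonicity estimate for `C¹` vector fields with degenerate ellipticity of
`p`-Laplacian type. -/
theorem monotonicity_estimate (n : ℕ) (p ν : ℝ) (hp : 1 < p) (hν : 0 < ν) :
    ∃ c : ℝ, 0 < c ∧
      ∀ s : ℝ, s ∈ Icc (0:ℝ) 1 →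
        ∀ a : EuclideanSpace ℝ (Fin n) → EuclideanSpace ℝ (Fin n), ContDiff ℝ 1 a →
          (∀ ξ lam : EuclideanSpace ℝ (Fin n), (s = 0 → ξ ≠ 0) →
            ν * (s^2 + ‖ξ‖^2) ^ ((p-2)/2) * ‖lam‖^2 ≤ (inner ℝ (fderiv ℝ a ξ lam) lam : ℝ)) →
          ∀ ξ₁ ξ₂ : EuclideanSpace ℝ (Fin n), (s = 0 → ¬(ξ₁ = 0 ∧ ξ₂ = 0)) →
            (1/c) * (s^2 + ‖ξ₁‖^2 + ‖ξ₂‖^2) ^ ((p-2)/2) * ‖ξ₁ - ξ₂‖^2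
              ≤ (inner ℝ (a ξ₁ - a ξ₂) (ξ₁ - ξ₂) : ℝ) := by
  refine ⟨max (1/ν) (4 * (8:ℝ) ^ ((p-2)/2) / ν), ?_, ?_⟩
  · exact lt_of_lt_of_le (by positivity) (le_max_left _ _)
  · intro s hs a ha hell ξ₁ ξ₂ hz
    rcases le_total ‖ξ₂‖ ‖ξ₁‖ with h | h
    · exact mono_aux n p ν hp hν s hs a ha hell ξ₁ ξ₂ hz h
    · have h2 := mono_aux n p ν hp hν s hs a ha hell ξ₂ ξ₁
        (fun h0 hb => hz h0 ⟨hb.2, hb.1⟩) h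
      have e1 : (inner ℝ (a ξ₂ - a ξ₁) (ξ₂ - ξ₁) : ℝ) = inner ℝ (a ξ₁ - a ξ₂) (ξ₁ - ξ₂) := by
        rw [show a ξ₂ - a ξ₁ = -(a ξ₁ - a ξ₂) by abel,
          show ξ₂ - ξ₁ = -(ξ₁ - ξ₂) by abel, inner_neg_neg]
      have e2 : s^2 + ‖ξ₂‖^2 + ‖ξ₁‖^2 = s^2 + ‖ξ₁‖^2 + ‖ξ₂‖^2 := by ring
      rw [e1, e2, norm_sub_rev ξ₂ ξ₁] at h2
      exact h2
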